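/- Let G be a unicyclic multigraph U^r_{n,m} as above. Then the number of facets of its spanning simplicial complex (equivalently, the number of spanning trees) equals f_d + 0 computed from the formula: ∏_{j=m+1}^{m+r''} t_j · ( (m − r')·∏_{i=1}^{r'} t_i + ∑_{i=1}^{r'} ∏_{b≠i, 1≤b≤r'} t_b ). -/

import Mathlib

/-- A subset `T` of the edges of a multigraph (given by its endpoint map `ends`)
is the edge set of a spanning tree. -/
def IsSpanningTree {V E : Type} (ends : E → Sym2 V) (T : Finset E) : Prop :=
  Set.InjOn ends T ∧ (∀ e ∈ T, ¬ (ends e).IsDiag) ∧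
    (SimpleGraph.fromEdgeSet (ends '' T)).IsTree

/-- Edge type of the unicyclic multigraph `U^r_{n,m}`: parallel classes on the `m`
cycle positions (sizes `t i`), parallel bridge classes (sizes `u j`), and `v'`
single bridges. -/
abbrev UniE (m r'' v' : ℕ) (t : Fin m → ℕ) (u : Fin r'' → ℕ) : Type :=
  (Σ i : Fin m, Fin (t i)) ⊕ (Σ j : Fin r'', Fin (u j)) ⊕ Fin v'

/-- Endpoint map: cycle classes join consecutive cycle vertices `c i, c (i+1 mod m)`,
bridge classes have endpoints `bp j`, single bridges `sp a`. -/
def uniEnds {V : Type} (m r'' v' : ℕ) (t : Fin m → ℕ) (u : Fin r'' → ℕ)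
    (c : Fin m → V) (bp : Fin r'' → Sym2 V) (sp : Fin v' → Sym2 V)
    (hm : 0 < m) : UniE m r'' v' t u → Sym2 V :=
  Sum.elim (fun e => s(c e.1, c ⟨(e.1.val + 1) % m, Nat.mod_lt _ hm⟩))
    (Sum.elim (fun e => bp e.1) sp)

/-- Endpoint pairs of the parallel classes. -/
def uniClassEnds {V : Type} (m r'' v' : ℕ)
    (c : Fin m → V) (bp : Fin r'' → Sym2 V) (sp : Fin v' → Sym2 V)
    (hm : 0 < m) : (Fin m ⊕ Fin r'' ⊕ Fin v') → Sym2 V :=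
  Sum.elim (fun i => s(c i, c ⟨(i.val + 1) % m, Nat.mod_lt _ hm⟩))
    (Sum.elim bp sp)

section AuxSpanningTree
open SimpleGraph

lemma reach_transfer {V : Type} {G H : SimpleGraph V}
    (h : ∀ x y, G.Adj x y → H.Reachable x y) {x y : V} (hxy : G.Reachable x y) :
    H.Reachable x y := by
  obtain ⟨w⟩ := hxy
  induction w with
  | nil => exact Reachable.refl _
  | cons ha _ ih => exact (h _ _ ha).trans ih

lemma connected_transfer {V : Type} {G H : SimpleGraph V} (hG : G.Connected)
    (h : ∀ x y, G.Adj x y → H.Reachable x y) : H.Connected :=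
  (connected_iff H).2 ⟨fun x y => reach_transfer h (hG.preconnected x y), hG.nonempty⟩

lemma card_le_of_connected {V : Type} [Fintype V] {G : SimpleGraph V} (hG : G.Connected) :
    Fintype.card V ≤ G.edgeSet.ncard + 1 := by
  classical
  obtain ⟨r⟩ := hG.nonempty
  have hex : ∀ v : V, v ≠ r → ∃ x : V, G.Adj v x ∧ G.dist x r < G.dist v r := by
    intro v hv
    obtain ⟨p, hp⟩ := hG.exists_walk_length_eq_dist v r
    cases p with
    | nil => exact absurd rfl hv
    | cons ha q =>
      refine ⟨_, ha, ?_⟩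
      have h1 : G.dist _ r ≤ q.length := dist_le q
      simp only [Walk.length_cons] at hp
      omega
  choose nx hadj hdist using hex
  let f : {v : V // v ≠ r} → G.edgeSet := fun v =>
    ⟨s(v.1, nx v.1 v.2), hadj v.1 v.2⟩
  have hfinj : Function.Injective f := by
    intro v w hvw
    have h1 := hdist v.1 v.2
    have h2 := hdist w.1 w.2
    have he : s(v.1, nx v.1 v.2) = s(w.1, nx w.1 w.2) := congrArg Subtype.val hvw
    rw [Sym2.eq_iff] at he
    rcases he with ⟨h3, h4⟩ | ⟨h3, h4⟩
    · exact Subtype.ext h3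
    · exfalso
      rw [h4] at h1
      rw [← h3] at h2
      omega
  have hcard : Nat.card {v : V // v ≠ r} ≤ Nat.card G.edgeSet :=
    Nat.card_le_card_of_injective f hfinj
  have h1 : Nat.card {v : V // v ≠ r} = Fintype.card V - 1 := by
    rw [Nat.card_eq_fintype_card, Fintype.card_subtype_compl]
    simp
  have h2 : Nat.card G.edgeSet = G.edgeSet.ncard := (Nat.card_coe_set_eq _)
  have : 1 ≤ Fintype.card V := Fintype.card_pos_iff.2 ⟨r⟩
  omega

lemma isTree_of_connected_of_card {V : Type} [Fintype V] {G : SimpleGraph V}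
    (hG : G.Connected) (hcard : G.edgeSet.ncard + 1 = Fintype.card V) : G.IsTree := by
  classical
  refine ⟨hG, ?_⟩
  rw [isAcyclic_iff_forall_adj_isBridge]
  intro a b hab
  rw [isBridge_iff]
  refine fun hreach => ?_
  set G' := G \ fromEdgeSet {s(a, b)} with hG'
  have hconn' : G'.Connected := by
    refine connected_transfer hG ?_
    intro x y hxy
    by_cases he : s(x, y) = s(a, b)
    · rw [Sym2.eq_iff] at he
      rcases he with ⟨h1, h2⟩ | ⟨h1, h2⟩
      · subst h1; subst h2; exact hreach
      · subst h1; subst h2; exact hreach.symm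
    · refine Adj.reachable ?_
      rw [hG', sdiff_adj]
      refine ⟨hxy, fun h => ?_⟩
      rw [fromEdgeSet_adj] at h
      exact he h.1
  have hE' : G'.edgeSet = G.edgeSet \ {s(a, b)} := by
    rw [hG', edgeSet_sdiff, edgeSet_fromEdgeSet]
    ext e
    simp only [Set.mem_diff, Set.mem_singleton_iff, Set.mem_setOf_eq]
    constructor
    · rintro ⟨h1, h2⟩
      refine ⟨h1, fun h3 => h2 ⟨h3, ?_⟩⟩
      subst h3
      simpa using hab.ne
    · rintro ⟨h1, h2⟩
      exact ⟨h1, fun h3 => h2 h3.1⟩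
  have hmem : s(a, b) ∈ G.edgeSet := hab
  have hle := card_le_of_connected hconn'
  rw [hE', Set.ncard_diff_singleton_of_mem hmem] at hle
  have hpos : 0 < G.edgeSet.ncard := (Set.ncard_pos (Set.toFinite _)).2 ⟨_, hmem⟩
  omega

lemma ncard_of_isTree {V : Type} [Fintype V] {G : SimpleGraph V} (hG : G.IsTree) :
    G.edgeSet.ncard + 1 = Fintype.card V := by
  classical
  letI : Fintype G.edgeSet := Fintype.ofFinite _
  have := hG.card_edgeFinset
  rwa [edgeFinset, ← Set.ncard_eq_toFinset_card'] at this

lemma mod_ne_aux (m i d : ℕ) (him : i < m) (hd : d + 1 < m) (h : (i + 1 + d) % m = i) :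
    False := by
  rcases Nat.lt_or_ge (i + 1 + d) m with h1 | h1
  · rw [Nat.mod_eq_of_lt h1] at h; omega
  · rw [Nat.mod_eq_sub_mod h1, Nat.mod_eq_of_lt (by omega)] at h; omega

lemma cycle_reach {V : Type} {m : ℕ} (hm : 2 ≤ m) (c : Fin m → V) (H : SimpleGraph V)
    (i : Fin m)
    (hadj : ∀ k : Fin m, k ≠ i →
      H.Adj (c k) (c ⟨(k.val + 1) % m, Nat.mod_lt _ (by omega)⟩)) :
    H.Reachable (c ⟨(i.val + 1) % m, Nat.mod_lt _ (by omega)⟩) (c i) := by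
  have key : ∀ d : ℕ, d ≤ m - 1 →
      H.Reachable (c ⟨(i.val + 1 + d) % m, Nat.mod_lt _ (by omega)⟩)
        (c ⟨(i.val + 1) % m, Nat.mod_lt _ (by omega)⟩) := by
    intro d
    induction d with
    | zero => intro _; exact Reachable.refl _
    | succ d ih =>
      intro hd
      have hR := ih (by omega)
      set k : Fin m := ⟨(i.val + 1 + d) % m, Nat.mod_lt _ (by omega)⟩ with hk
      have hki : k ≠ i := by
        intro h
        have hh : (i.val + 1 + d) % m = i.val := congrArg Fin.val h
        exact mod_ne_aux m i.val d i.isLt (by omega) hh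
      have ha := hadj k hki
      have hval : (k.val + 1) % m = (i.val + 1 + (d + 1)) % m := by
        rw [hk]
        simp only [Nat.mod_add_mod]
        ring_nf
      have : (⟨(k.val + 1) % m, Nat.mod_lt _ (by omega)⟩ : Fin m)
          = ⟨(i.val + 1 + (d + 1)) % m, Nat.mod_lt _ (by omega)⟩ := Fin.ext hval
      rw [this] at ha
      exact ha.symm.reachable.trans hR
  have h1 := key (m - 1) (le_refl _)
  have h2 : (i.val + 1 + (m - 1)) % m = i.val := by
    have : i.val + 1 + (m - 1) = i.val + m := by omega
    rw [this, Nat.add_mod_right, Nat.mod_eq_of_lt i.isLt]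
  have h3 : (⟨(i.val + 1 + (m - 1)) % m, Nat.mod_lt _ (by omega)⟩ : Fin m) = i :=
    Fin.ext h2
  rw [h3] at h1
  exact h1.symm

/-- The parallel class of an edge. -/
def classOfE {m r'' v' : ℕ} {t : Fin m → ℕ} {u : Fin r'' → ℕ} :
    UniE m r'' v' t u → Fin m ⊕ Fin r'' ⊕ Fin v' :=
  Sum.elim (fun e => Sum.inl e.1)
    (Sum.elim (fun e => Sum.inr (Sum.inl e.1)) (fun a => Sum.inr (Sum.inr a)))

lemma uniEnds_eq_class {V : Type} (m r'' v' : ℕ) (t : Fin m → ℕ) (u : Fin r'' → ℕ)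
    (c : Fin m → V) (bp : Fin r'' → Sym2 V) (sp : Fin v' → Sym2 V) (hm : 0 < m)
    (e : UniE m r'' v' t u) :
    uniEnds m r'' v' t u c bp sp hm e = uniClassEnds m r'' v' c bp sp hm (classOfE e) := by
  rcases e with ⟨i, x⟩ | (⟨j, y⟩ | a) <;> rfl

/-- Index data for a spanning tree: the omitted cycle class, representatives for
the remaining cycle classes, representatives for bridge classes. -/
abbrev SelIdx (m r'' : ℕ) (t : Fin m → ℕ) (u : Fin r'' → ℕ) : Type :=
  Σ i : Fin m, ((b : Fin m) → b ≠ i → Fin (t b)) × ((j : Fin r'') → Fin (u j))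

def selP {m r'' v' : ℕ} {t : Fin m → ℕ} {u : Fin r'' → ℕ}
    (a : SelIdx m r'' t u) : UniE m r'' v' t u → Bool :=
  fun e => match e with
  | .inl ⟨b, x⟩ => if h : b = a.1 then false else decide (x = a.2.1 b h)
  | .inr (.inl ⟨j, y⟩) => decide (y = a.2.2 j)
  | .inr (.inr _) => true

def selT {m r'' v' : ℕ} {t : Fin m → ℕ} {u : Fin r'' → ℕ}
    (a : SelIdx m r'' t u) : Finset (UniE m r'' v' t u) :=
  Finset.univ.filter (fun e => selP a e = true)

lemma mem_selT_inl {m r'' v' : ℕ} {t : Fin m → ℕ} {u : Fin r'' → ℕ}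
    (a : SelIdx m r'' t u) (b : Fin m) (x : Fin (t b)) :
    (Sum.inl ⟨b, x⟩ : UniE m r'' v' t u) ∈ selT a ↔ ∃ h : b ≠ a.1, x = a.2.1 b h := by
  simp only [selT, Finset.mem_filter, Finset.mem_univ, true_and, selP]
  by_cases h : b = a.1
  · simp [h]
  · simp [h]

lemma mem_selT_inrl {m r'' v' : ℕ} {t : Fin m → ℕ} {u : Fin r'' → ℕ}
    (a : SelIdx m r'' t u) (j : Fin r'') (y : Fin (u j)) :
    (Sum.inr (Sum.inl ⟨j, y⟩) : UniE m r'' v' t u) ∈ selT a ↔ y = a.2.2 j := by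
  simp [selT, selP]

lemma mem_selT_inrr {m r'' v' : ℕ} {t : Fin m → ℕ} {u : Fin r'' → ℕ}
    (a : SelIdx m r'' t u) (z : Fin v') :
    (Sum.inr (Sum.inr z) : UniE m r'' v' t u) ∈ selT a := by
  simp [selT, selP]

/-- Classes present in `selT a` are exactly the classes other than `inl a.1`. -/
lemma classOf_selT {m r'' v' : ℕ} {t : Fin m → ℕ} {u : Fin r'' → ℕ}
    (a : SelIdx m r'' t u) (e : UniE m r'' v' t u) (he : e ∈ selT (v' := v') a) :
    classOfE e ≠ Sum.inl a.1 := by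
  rcases e with ⟨b, x⟩ | (⟨j, y⟩ | z)
  · rw [mem_selT_inl] at he
    obtain ⟨h, _⟩ := he
    simpa [classOfE] using h
  · simp [classOfE]
  · simp [classOfE]

lemma card_pi_ne {m : ℕ} (t : Fin m → ℕ) (i : Fin m) :
    Fintype.card ((b : Fin m) → b ≠ i → Fin (t b)) = ∏ b ∈ Finset.univ.erase i, t b := by
  classical
  rw [Fintype.card_pi]
  rw [← Finset.prod_erase_mul _ _ (Finset.mem_univ i)]
  have h1 : Fintype.card (i ≠ i → Fin (t i)) = 1 := by
    rw [Fintype.card_eq_one_iff]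
    refine ⟨fun h => absurd rfl h, fun f => funext fun h => absurd rfl h⟩
  rw [h1, mul_one]
  refine Finset.prod_congr rfl fun b hb => ?_
  have hbi : b ≠ i := (Finset.mem_erase.1 hb).1
  haveI : Unique (b ≠ i) := ⟨⟨hbi⟩, fun _ => rfl⟩
  rw [Fintype.card_congr (Equiv.funUnique (b ≠ i) (Fin (t b)))]
  exact Fintype.card_fin _

lemma card_selIdx (m r'' : ℕ) (t : Fin m → ℕ) (u : Fin r'' → ℕ) :
    Fintype.card (SelIdx m r'' t u)
      = ∑ i : Fin m, (∏ b ∈ Finset.univ.erase i, t b) * ∏ j, u j := by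
  classical
  rw [Fintype.card_sigma]
  refine Finset.sum_congr rfl fun i _ => ?_
  rw [Fintype.card_prod, card_pi_ne]
  congr 1
  rw [Fintype.card_pi]
  exact Finset.prod_congr rfl fun j _ => Fintype.card_fin _

lemma filter_lt_card (m r' : ℕ) (hr' : r' ≤ m) :
    (Finset.univ.filter (fun i : Fin m => i.val < r')).card = r' := by
  classical
  have : Finset.univ.filter (fun i : Fin m => i.val < r')
      = Finset.map ⟨Fin.castLE hr', Fin.castLE_injective hr'⟩ Finset.univ := by
    ext x
    simp only [Finset.mem_filter, Finset.mem_univ, true_and, Finset.mem_map,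
      Function.Embedding.coeFn_mk]
    constructor
    · intro h
      exact ⟨⟨x.val, h⟩, rfl⟩
    · rintro ⟨a, rfl⟩
      exact a.isLt
  rw [this, Finset.card_map, Finset.card_univ, Fintype.card_fin]

lemma arith_final (m r' : ℕ) (hr' : r' ≤ m) (t : Fin m → ℕ)
    (ht1 : ∀ i : Fin m, r' ≤ i.val → t i = 1) :
    ∑ i : Fin m, ∏ b ∈ Finset.univ.erase i, t b
      = (m - r') * (∏ i ∈ Finset.univ.filter (fun i : Fin m => i.val < r'), t i)
        + ∑ i ∈ Finset.univ.filter (fun i : Fin m => i.val < r'),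
            ∏ b ∈ (Finset.univ.filter (fun b : Fin m => b.val < r')).erase i, t b := by
  classical
  set F := Finset.univ.filter (fun i : Fin m => i.val < r') with hF
  have hprod : ∀ i : Fin m, ∏ b ∈ Finset.univ.erase i, t b = ∏ b ∈ F.erase i, t b := by
    intro i
    refine (Finset.prod_subset ?_ ?_).symm
    · intro b hb
      rw [Finset.mem_erase] at hb ⊢
      exact ⟨hb.1, Finset.mem_univ _⟩
    · intro b hb hnb
      rw [Finset.mem_erase] at hb
      refine ht1 b ?_
      by_contra hlt
      exact hnb (Finset.mem_erase.2 ⟨hb.1, by rw [hF]; simp; omega⟩)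
  rw [Finset.sum_congr rfl (fun i _ => hprod i)]
  rw [← Finset.sum_filter_add_sum_filter_not Finset.univ (fun i : Fin m => i.val < r')]
  rw [add_comm]
  congr 1
  · have hconst : ∀ i ∈ Finset.univ.filter (fun i : Fin m => ¬ i.val < r'),
        ∏ b ∈ F.erase i, t b = ∏ b ∈ F, t b := by
      intro i hi
      rw [Finset.mem_filter] at hi
      rw [Finset.erase_eq_of_notMem]
      rw [hF]
      simp only [Finset.mem_filter, Finset.mem_univ, true_and]
      exact hi.2
    rw [Finset.sum_congr rfl hconst, Finset.sum_const, smul_eq_mul]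
    congr 1
    have h1 := filter_lt_card m r' hr'
    have h2 : (Finset.univ.filter (fun i : Fin m => i.val < r')).card
        + (Finset.univ.filter (fun i : Fin m => ¬ i.val < r')).card = m := by
      rw [Finset.card_filter_add_card_filter_not, Finset.card_univ, Fintype.card_fin]
    omega

lemma edgeSet_fromEdgeSet_of_nondiag {V : Type} (S : Set (Sym2 V))
    (h : ∀ s ∈ S, ¬ s.IsDiag) : (SimpleGraph.fromEdgeSet S).edgeSet = S := by
  rw [edgeSet_fromEdgeSet]
  ext s
  simp only [Set.mem_diff, Set.mem_setOf_eq]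
  exact ⟨fun hs => hs.1, fun hs => ⟨hs, h s hs⟩⟩

lemma cends_nondiag {V : Type} (m r'' v' : ℕ) (hm : 2 ≤ m)
    (c : Fin m → V) (hc : Function.Injective c)
    (bp : Fin r'' → Sym2 V) (sp : Fin v' → Sym2 V)
    (hbp : ∀ j, ¬ (bp j).IsDiag) (hsp : ∀ a, ¬ (sp a).IsDiag) (hm0 : 0 < m)
    (κ : Fin m ⊕ Fin r'' ⊕ Fin v') :
    ¬ (uniClassEnds m r'' v' c bp sp hm0 κ).IsDiag := by
  rcases κ with i | (j | z)
  · show ¬ (s(c i, c ⟨(i.val + 1) % m, Nat.mod_lt _ hm0⟩)).IsDiag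
    rw [Sym2.mk_isDiag_iff]
    intro h
    have h2 : i.val = (i.val + 1) % m := congrArg Fin.val (hc h)
    exact mod_ne_aux m i.val 0 i.isLt (by omega) (by simp only [Nat.add_zero]; exact h2.symm)
  · exact hbp j
  · exact hsp z

lemma range_uniEnds_eq {V : Type} (m r'' v' : ℕ) (t : Fin m → ℕ) (u : Fin r'' → ℕ)
    (c : Fin m → V) (bp : Fin r'' → Sym2 V) (sp : Fin v' → Sym2 V) (hm0 : 0 < m)
    (ht : ∀ i, 0 < t i) (hu : ∀ j, 0 < u j) :
    Set.range (uniEnds m r'' v' t u c bp sp hm0)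
      = Set.range (uniClassEnds m r'' v' c bp sp hm0) := by
  ext s
  constructor
  · rintro ⟨e, rfl⟩
    exact ⟨classOfE e, (uniEnds_eq_class m r'' v' t u c bp sp hm0 e).symm⟩
  · rintro ⟨κ, rfl⟩
    rcases κ with i | (j | z)
    · exact ⟨Sum.inl ⟨i, ⟨0, ht i⟩⟩, rfl⟩
    · exact ⟨Sum.inr (Sum.inl ⟨j, ⟨0, hu j⟩⟩), rfl⟩
    · exact ⟨Sum.inr (Sum.inr z), rfl⟩

lemma ncard_range_cends {V : Type} (m r'' v' : ℕ)
    (c : Fin m → V) (bp : Fin r'' → Sym2 V) (sp : Fin v' → Sym2 V) (hm0 : 0 < m)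
    (hinj : Function.Injective (uniClassEnds m r'' v' c bp sp hm0)) :
    (Set.range (uniClassEnds m r'' v' c bp sp hm0)).ncard = m + r'' + v' := by
  rw [← Set.image_univ, Set.ncard_image_of_injective _ hinj, Set.ncard_univ,
    Nat.card_eq_fintype_card]
  simp [Fintype.card_sum, Fintype.card_fin]
  omega

/-- The graph obtained by deleting one cycle class from the full class-edge set is
connected. -/
lemma conn_minus_cycle_edge {V : Type} (m r'' v' : ℕ) (hm : 3 ≤ m)
    (t : Fin m → ℕ) (u : Fin r'' → ℕ)
    (c : Fin m → V) (hc : Function.Injective c)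
    (bp : Fin r'' → Sym2 V) (sp : Fin v' → Sym2 V)
    (hbp : ∀ j, ¬ (bp j).IsDiag) (hsp : ∀ a, ¬ (sp a).IsDiag) (hm0 : 0 < m)
    (hinj : Function.Injective (uniClassEnds m r'' v' c bp sp hm0))
    (hconn : (SimpleGraph.fromEdgeSet
      (Set.range (uniClassEnds m r'' v' c bp sp hm0))).Connected)
    (i : Fin m) :
    (SimpleGraph.fromEdgeSet
      (Set.range (uniClassEnds m r'' v' c bp sp hm0)
        \ {uniClassEnds m r'' v' c bp sp hm0 (Sum.inl i)})).Connected := by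
  set cends := uniClassEnds m r'' v' c bp sp hm0 with hcends
  set G' := SimpleGraph.fromEdgeSet (Set.range cends \ {cends (Sum.inl i)}) with hG'
  have hnd := cends_nondiag m r'' v' (by omega) c hc bp sp hbp hsp hm0
  -- adjacency along all cycle edges except class i
  have hadj : ∀ k : Fin m, k ≠ i →
      G'.Adj (c k) (c ⟨(k.val + 1) % m, Nat.mod_lt _ (by omega)⟩) := by
    intro k hk
    rw [hG', fromEdgeSet_adj]
    constructor
    · refine ⟨⟨Sum.inl k, rfl⟩, ?_⟩
      intro hmem
      rw [Set.mem_singleton_iff] at hmem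
      exact hk (Sum.inl.inj (hinj hmem))
    · intro h
      exact hnd (Sum.inl k) (Sym2.mk_isDiag_iff.2 h)
  have hreach := cycle_reach (by omega) c G' i hadj
  refine connected_transfer hconn ?_
  intro x y hxy
  rw [fromEdgeSet_adj] at hxy
  obtain ⟨⟨κ, hκ⟩, hne⟩ := hxy
  by_cases hki : κ = Sum.inl i
  · subst hki
    have : cends (Sum.inl i) = s(c i, c ⟨(i.val + 1) % m, Nat.mod_lt _ (by omega)⟩) := rfl
    rw [this] at hκ
    rw [Sym2.eq_iff] at hκ
    rcases hκ with ⟨h1, h2⟩ | ⟨h1, h2⟩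
    · rw [← h1, ← h2]
      exact hreach.symm
    · rw [← h1, ← h2]
      exact hreach
  · refine Adj.reachable ?_
    rw [hG', fromEdgeSet_adj]
    refine ⟨⟨⟨κ, hκ⟩, ?_⟩, hne⟩
    rw [Set.mem_singleton_iff, ← hκ]
    intro h
    exact hki (hinj h)

lemma image_selT {V : Type} (m r'' v' : ℕ) (t : Fin m → ℕ) (u : Fin r'' → ℕ)
    (c : Fin m → V) (bp : Fin r'' → Sym2 V) (sp : Fin v' → Sym2 V) (hm0 : 0 < m)
    (hinj : Function.Injective (uniClassEnds m r'' v' c bp sp hm0))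
    (a : SelIdx m r'' t u) :
    (uniEnds m r'' v' t u c bp sp hm0) '' ↑(selT (v' := v') a)
      = Set.range (uniClassEnds m r'' v' c bp sp hm0)
        \ {uniClassEnds m r'' v' c bp sp hm0 (Sum.inl a.1)} := by
  ext s
  constructor
  · rintro ⟨e, he, rfl⟩
    rw [Finset.mem_coe] at he
    rw [uniEnds_eq_class]
    refine ⟨⟨_, rfl⟩, ?_⟩
    rw [Set.mem_singleton_iff]
    intro hs
    exact classOf_selT a e he (hinj hs)
  · rintro ⟨⟨κ, rfl⟩, hs⟩
    rw [Set.mem_singleton_iff] at hs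
    have hκ : κ ≠ Sum.inl a.1 := fun h => hs (by rw [h])
    rcases κ with b | (j | z)
    · have hb : b ≠ a.1 := fun h => hκ (by rw [h])
      refine ⟨Sum.inl ⟨b, a.2.1 b hb⟩, ?_, ?_⟩
      · rw [Finset.mem_coe, mem_selT_inl]; exact ⟨hb, rfl⟩
      · rw [uniEnds_eq_class]; rfl
    · refine ⟨Sum.inr (Sum.inl ⟨j, a.2.2 j⟩), ?_, ?_⟩
      · rw [Finset.mem_coe, mem_selT_inrl]
      · rw [uniEnds_eq_class]; rfl
    · refine ⟨Sum.inr (Sum.inr z), ?_, ?_⟩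
      · rw [Finset.mem_coe]; exact mem_selT_inrr a z
      · rw [uniEnds_eq_class]; rfl

lemma selT_isSpanningTree {V : Type} [Fintype V] (m r'' v' : ℕ) (hm : 3 ≤ m)
    (t : Fin m → ℕ) (ht : ∀ i, 0 < t i) (u : Fin r'' → ℕ) (hu : ∀ j, 0 < u j)
    (c : Fin m → V) (hc : Function.Injective c)
    (bp : Fin r'' → Sym2 V) (sp : Fin v' → Sym2 V)
    (hbp : ∀ j, ¬ (bp j).IsDiag) (hsp : ∀ a, ¬ (sp a).IsDiag) (hm0 : 0 < m)
    (hinj : Function.Injective (uniClassEnds m r'' v' c bp sp hm0))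
    (hconn : (SimpleGraph.fromEdgeSet
      (Set.range (uniEnds m r'' v' t u c bp sp hm0))).Connected)
    (hV : Fintype.card V = m + r'' + v')
    (a : SelIdx m r'' t u) :
    IsSpanningTree (uniEnds m r'' v' t u c bp sp hm0) (selT a) := by
  have hnd := cends_nondiag m r'' v' (by omega) c hc bp sp hbp hsp hm0
  refine ⟨?_, ?_, ?_⟩
  · -- InjOn
    intro e1 h1 e2 h2 heq
    rw [Finset.mem_coe] at h1 h2
    rw [uniEnds_eq_class, uniEnds_eq_class] at heq
    have hcl := hinj heq
    rcases e1 with ⟨b1, x1⟩ | (⟨j1, y1⟩ | z1) <;>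
      rcases e2 with ⟨b2, x2⟩ | (⟨j2, y2⟩ | z2) <;>
      simp only [classOfE, Sum.elim_inl, Sum.elim_inr, Sum.inl.injEq, Sum.inr.injEq,
        reduceCtorEq] at hcl
    · subst hcl
      rw [mem_selT_inl] at h1 h2
      obtain ⟨hb1, hx1⟩ := h1
      obtain ⟨hb2, hx2⟩ := h2
      rw [hx1, hx2]
    · subst hcl
      rw [mem_selT_inrl] at h1 h2
      rw [h1, h2]
    · subst hcl
      rfl
  · -- no diagonals
    intro e he
    rw [uniEnds_eq_class]
    exact hnd _
  · -- tree
    rw [image_selT m r'' v' t u c bp sp hm0 hinj a]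
    have hconn2 : (SimpleGraph.fromEdgeSet
        (Set.range (uniClassEnds m r'' v' c bp sp hm0))).Connected := by
      rwa [range_uniEnds_eq m r'' v' t u c bp sp hm0 ht hu] at hconn
    refine isTree_of_connected_of_card ?_ ?_
    · exact conn_minus_cycle_edge m r'' v' hm t u c hc bp sp hbp hsp hm0 hinj hconn2 a.1
    · rw [edgeSet_fromEdgeSet_of_nondiag]
      · rw [Set.ncard_diff_singleton_of_mem (Set.mem_range_self (Sum.inl a.1))]
        rw [ncard_range_cends m r'' v' c bp sp hm0 hinj]
        omega
      · rintro s ⟨⟨κ, rfl⟩, -⟩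
        exact hnd κ

lemma selT_injective {m r'' v' : ℕ} {t : Fin m → ℕ} {u : Fin r'' → ℕ} :
    Function.Injective (selT (m := m) (r'' := r'') (v' := v') (t := t) (u := u)) := by
  rintro ⟨i, f, g⟩ ⟨i', f', g'⟩ hsel
  have hii : i = i' := by
    by_contra hne
    have h1 : (Sum.inl ⟨i, f' i hne⟩ : UniE m r'' v' t u)
        ∈ selT (v' := v') ⟨i', f', g'⟩ := by
      rw [mem_selT_inl]
      exact ⟨hne, rfl⟩
    rw [← hsel, mem_selT_inl] at h1
    obtain ⟨h, -⟩ := h1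
    exact h rfl
  subst hii
  have hf : f = f' := by
    funext b hb
    have h1 : (Sum.inl ⟨b, f b hb⟩ : UniE m r'' v' t u) ∈ selT (v' := v') ⟨i, f, g⟩ := by
      rw [mem_selT_inl]; exact ⟨hb, rfl⟩
    rw [hsel, mem_selT_inl] at h1
    obtain ⟨h, he⟩ := h1
    exact he
  have hg : g = g' := by
    funext j
    have h1 : (Sum.inr (Sum.inl ⟨j, g j⟩) : UniE m r'' v' t u)
        ∈ selT (v' := v') ⟨i, f, g⟩ := by
      rw [mem_selT_inrl]
    rw [hsel, mem_selT_inrl] at h1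
    exact h1
  rw [hf, hg]

lemma selT_surjective {V : Type} [Fintype V] (m r'' v' : ℕ) (hm : 3 ≤ m)
    (t : Fin m → ℕ) (u : Fin r'' → ℕ)
    (c : Fin m → V) (hc : Function.Injective c)
    (bp : Fin r'' → Sym2 V) (sp : Fin v' → Sym2 V)
    (hbp : ∀ j, ¬ (bp j).IsDiag) (hsp : ∀ a, ¬ (sp a).IsDiag) (hm0 : 0 < m)
    (hinj : Function.Injective (uniClassEnds m r'' v' c bp sp hm0))
    (hV : Fintype.card V = m + r'' + v')
    (T : Finset (UniE m r'' v' t u))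
    (hT : IsSpanningTree (uniEnds m r'' v' t u c bp sp hm0) T) :
    ∃ a : SelIdx m r'' t u, selT a = T := by
  classical
  obtain ⟨hTinj, hTnd, hTtree⟩ := hT
  have hndall := cends_nondiag m r'' v' (by omega) c hc bp sp hbp hsp hm0
  have hclinj : Set.InjOn classOfE (T : Set (UniE m r'' v' t u)) := by
    intro e1 h1 e2 h2 heq
    refine hTinj h1 h2 ?_
    rw [uniEnds_eq_class, uniEnds_eq_class, heq]
  -- cardinality of T
  have him : ((uniEnds m r'' v' t u c bp sp hm0) '' ↑T).ncard + 1 = m + r'' + v' := by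
    have h1 := ncard_of_isTree hTtree
    rw [edgeSet_fromEdgeSet_of_nondiag _ ?_] at h1
    · rw [hV] at h1; exact h1
    · rintro s ⟨e, he, rfl⟩
      exact hTnd e (Finset.mem_coe.1 he)
  have hTcard : T.card = m + r'' + v' - 1 := by
    have h2 : ((uniEnds m r'' v' t u c bp sp hm0) '' ↑T).ncard = T.card := by
      rw [Set.ncard_image_of_injOn hTinj, Set.ncard_coe_finset]
    omega
  set S : Finset (Fin m ⊕ Fin r'' ⊕ Fin v') := T.image classOfE with hS
  have hScard : S.card = m + r'' + v' - 1 := by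
    rw [hS, Finset.card_image_of_injOn hclinj, hTcard]
  have hcompl : Sᶜ.card = 1 := by
    rw [Finset.card_compl, hScard]
    simp only [Fintype.card_sum, Fintype.card_fin]
    omega
  obtain ⟨κ, hκ⟩ := Finset.card_eq_one.1 hcompl
  have hκnotin : κ ∉ S := by
    have : κ ∈ Sᶜ := by rw [hκ]; exact Finset.mem_singleton_self κ
    exact Finset.mem_compl.1 this
  have hothers : ∀ κ', κ' ≠ κ → κ' ∈ S := by
    intro κ' h
    by_contra hn
    have : κ' ∈ Sᶜ := Finset.mem_compl.2 hn
    rw [hκ, Finset.mem_singleton] at this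
    exact h this
  -- the missing class is a cycle class
  have hallcyc : (∀ k : Fin m, (Sum.inl k : Fin m ⊕ Fin r'' ⊕ Fin v') ∈ S) → False := by
    intro hall
    set ends := uniEnds m r'' v' t u c bp sp hm0 with hends
    set GT := SimpleGraph.fromEdgeSet (ends '' ↑T) with hGT
    have hedge : ∀ k : Fin m,
        uniClassEnds m r'' v' c bp sp hm0 (Sum.inl k) ∈ ends '' ↑T := by
      intro k
      obtain ⟨e, heT, hecl⟩ := Finset.mem_image.1 (hall k)
      exact ⟨e, Finset.mem_coe.2 heT, by rw [hends, uniEnds_eq_class, hecl]⟩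
    have hGadj : ∀ k : Fin m,
        GT.Adj (c k) (c ⟨(k.val + 1) % m, Nat.mod_lt _ hm0⟩) := by
      intro k
      rw [hGT, fromEdgeSet_adj]
      exact ⟨hedge k, fun h => hndall (Sum.inl k) (Sym2.mk_isDiag_iff.2 h)⟩
    set i0 : Fin m := ⟨0, by omega⟩ with hi0
    have hbridge := isAcyclic_iff_forall_adj_isBridge.1 hTtree.IsAcyclic (hGadj i0)
    rw [isBridge_iff] at hbridge
    apply hbridge
    set H := GT \ SimpleGraph.fromEdgeSet
      {s(c i0, c ⟨(i0.val + 1) % m, Nat.mod_lt _ hm0⟩)} with hH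
    have hHadj : ∀ k : Fin m, k ≠ i0 →
        H.Adj (c k) (c ⟨(k.val + 1) % m, Nat.mod_lt _ (by omega)⟩) := by
      intro k hk
      rw [hH, sdiff_adj]
      refine ⟨hGadj k, ?_⟩
      rw [fromEdgeSet_adj]
      rintro ⟨hmem, -⟩
      rw [Set.mem_singleton_iff] at hmem
      exact hk (Sum.inl.inj (hinj hmem))
    exact (cycle_reach (by omega) c H i0 hHadj).symm
  have hcyc : ∃ i : Fin m, κ = Sum.inl i := by
    rcases κ with i | (j | z)
    · exact ⟨i, rfl⟩
    · exact absurd (hallcyc fun k => hothers _ (by simp)) id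
    · exact absurd (hallcyc fun k => hothers _ (by simp)) id
  obtain ⟨i, rfl⟩ := hcyc
  -- extract representatives
  have hrep : ∀ b : Fin m, b ≠ i →
      ∃ x : Fin (t b), (Sum.inl ⟨b, x⟩ : UniE m r'' v' t u) ∈ T := by
    intro b hb
    have hmem : (Sum.inl b : Fin m ⊕ Fin r'' ⊕ Fin v') ∈ S :=
      hothers _ (by simp [hb])
    obtain ⟨e, heT, hecl⟩ := Finset.mem_image.1 hmem
    rcases e with ⟨b', x⟩ | (⟨j, y⟩ | z) <;>
      simp only [classOfE, Sum.elim_inl, Sum.elim_inr, Sum.inl.injEq,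
        reduceCtorEq] at hecl
    subst hecl
    exact ⟨x, heT⟩
  have hrepu : ∀ j : Fin r'',
      ∃ y : Fin (u j), (Sum.inr (Sum.inl ⟨j, y⟩) : UniE m r'' v' t u) ∈ T := by
    intro j
    have hmem : (Sum.inr (Sum.inl j) : Fin m ⊕ Fin r'' ⊕ Fin v') ∈ S :=
      hothers _ (by simp)
    obtain ⟨e, heT, hecl⟩ := Finset.mem_image.1 hmem
    rcases e with ⟨b', x⟩ | (⟨j', y⟩ | z) <;>
      simp only [classOfE, Sum.elim_inl, Sum.elim_inr, Sum.inl.injEq, Sum.inr.injEq,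
        reduceCtorEq] at hecl
    subst hecl
    exact ⟨y, heT⟩
  have hrepz : ∀ z : Fin v', (Sum.inr (Sum.inr z) : UniE m r'' v' t u) ∈ T := by
    intro z
    have hmem : (Sum.inr (Sum.inr z) : Fin m ⊕ Fin r'' ⊕ Fin v') ∈ S :=
      hothers _ (by simp)
    obtain ⟨e, heT, hecl⟩ := Finset.mem_image.1 hmem
    rcases e with ⟨b', x⟩ | (⟨j', y⟩ | z') <;>
      simp only [classOfE, Sum.elim_inl, Sum.elim_inr, Sum.inl.injEq, Sum.inr.injEq,
        reduceCtorEq] at hecl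
    subst hecl
    exact heT
  choose f hf using hrep
  choose g hg using hrepu
  refine ⟨⟨i, f, g⟩, ?_⟩
  ext e
  constructor
  · intro he
    rcases e with ⟨b, x⟩ | (⟨j, y⟩ | z)
    · rw [mem_selT_inl] at he
      obtain ⟨hb, rfl⟩ := he
      exact hf b hb
    · rw [mem_selT_inrl] at he
      rw [he]
      exact hg j
    · exact hrepz z
  · intro heT
    rcases e with ⟨b, x⟩ | (⟨j, y⟩ | z)
    · have hb : b ≠ i := by
        rintro rfl
        exact hκnotin (Finset.mem_image.2 ⟨Sum.inl ⟨b, x⟩, heT, rfl⟩)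
      have heq : (Sum.inl ⟨b, x⟩ : UniE m r'' v' t u) = Sum.inl ⟨b, f b hb⟩ := by
        refine hclinj (Finset.mem_coe.2 heT) (Finset.mem_coe.2 (hf b hb)) rfl
      rw [mem_selT_inl]
      refine ⟨hb, ?_⟩
      have := (Sum.inl.inj heq)
      exact (Sigma.mk.inj_iff.1 this).2.eq
    · have heq : (Sum.inr (Sum.inl ⟨j, y⟩) : UniE m r'' v' t u)
          = Sum.inr (Sum.inl ⟨j, g j⟩) := by
        refine hclinj (Finset.mem_coe.2 heT) (Finset.mem_coe.2 (hg j)) rfl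
      rw [mem_selT_inrl]
      have := Sum.inl.inj (Sum.inr.inj heq)
      exact (Sigma.mk.inj_iff.1 this).2.eq
    · exact mem_selT_inrr _ z

end AuxSpanningTree

theorem stmt12 {V : Type} [Fintype V] (m r' r'' v' n : ℕ) (hm : 3 ≤ m) (hr' : r' ≤ m)
    (t : Fin m → ℕ) (ht2 : ∀ i : Fin m, i.val < r' → 2 ≤ t i)
    (ht1 : ∀ i : Fin m, r' ≤ i.val → t i = 1)
    (u : Fin r'' → ℕ) (hu : ∀ j, 2 ≤ u j)
    (c : Fin m → V) (hc : Function.Injective c)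
    (bp : Fin r'' → Sym2 V) (sp : Fin v' → Sym2 V)
    (hbp : ∀ j, ¬ (bp j).IsDiag) (hsp : ∀ a, ¬ (sp a).IsDiag)
    (hinj : Function.Injective (uniClassEnds m r'' v' c bp sp (by omega)))
    (hconn : (SimpleGraph.fromEdgeSet
      (Set.range (uniEnds m r'' v' t u c bp sp (by omega)))).Connected)
    (hV : Fintype.card V = m + r'' + v')
    (hn : n = (∑ i, t i) + (∑ j, u j) + v') :
    Nat.card {T : Finset (UniE m r'' v' t u) //
        IsSpanningTree (uniEnds m r'' v' t u c bp sp (by omega)) T} =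
      (∏ j, u j) *
        ((m - r') * (∏ i ∈ Finset.univ.filter (fun i : Fin m => i.val < r'), t i) +
          ∑ i ∈ Finset.univ.filter (fun i : Fin m => i.val < r'),
            ∏ b ∈ (Finset.univ.filter (fun b : Fin m => b.val < r')).erase i, t b) := by
  have hm0 : 0 < m := by omega
  have ht : ∀ i, 0 < t i := by
    intro i
    by_cases h : i.val < r'
    · have := ht2 i h; omega
    · have := ht1 i (by omega); omega
  have hupos : ∀ j, 0 < u j := fun j => by have := hu j; omega
  have key : Nat.card {T : Finset (UniE m r'' v' t u) //
      IsSpanningTree (uniEnds m r'' v' t u c bp sp hm0) T}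
      = Fintype.card (SelIdx m r'' t u) := by
    rw [← Nat.card_eq_fintype_card]
    refine (Nat.card_eq_of_bijective
      (fun a : SelIdx m r'' t u =>
        (⟨selT a, selT_isSpanningTree m r'' v' hm t ht u hupos c hc bp sp hbp hsp hm0
          hinj hconn hV a⟩ : {T : Finset (UniE m r'' v' t u) //
            IsSpanningTree (uniEnds m r'' v' t u c bp sp hm0) T})) ?_).symm
    constructor
    · intro a a' haa
      exact selT_injective (congrArg Subtype.val haa)
    · rintro ⟨T, hT⟩
      obtain ⟨a, ha⟩ := selT_surjective m r'' v' hm t u c hc bp sp hbp hsp hm0 hinj hV T hT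
      exact ⟨a, Subtype.ext ha⟩
  rw [show (Nat.card {T : Finset (UniE m r'' v' t u) //
      IsSpanningTree (uniEnds m r'' v' t u c bp sp (by omega : 0 < m)) T})
      = Nat.card {T : Finset (UniE m r'' v' t u) //
      IsSpanningTree (uniEnds m r'' v' t u c bp sp hm0) T} from rfl, key,
    card_selIdx, ← Finset.sum_mul, arith_final m r' hr' t ht1, mul_comm]
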